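/- Let n ≥ 5 be odd, m = (2^n+1)/3, and let k ∈ ℕ with k < m. Set x = 7m + 8k (the element (1,2,k) of H). Then D(x) = min{ ν(y) : y ∈ H, y ≥ x } equals: 6 if k = 0; 8 if 1 ≤ k ≤ ⌊m/4⌋; 8(⌈k − m/4⌉ + 1) if ⌈m/4⌉ ≤ k ≤ ⌊m/2⌋ − 2; 2(⌈k + m/2⌉ + 1) + 6(⌈k + m/2⌉ − m + 1) if ⌊m/2⌋ − 1 ≤ k ≤ ⌊3m/4⌋ − 2; 4(⌈k + m/4⌉ + 1) + 4(⌈k + m/4⌉ − m + 1) if ⌊3m/4⌋ − 1 ≤ k ≤ m−2; and 6m if k = m−1. -/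

import Mathlib

namespace Stmt6Aux

def fH : ℕ → ℕ
  | 0 => 0 | 1 => 3 | 2 => 6 | 3 => 9 | 4 => 4 | 5 => 7 | 6 => 2 | _ => 5

@[simp] lemma fH0 : fH 0 = 0 := rfl
@[simp] lemma fH1 : fH 1 = 3 := rfl
@[simp] lemma fH2 : fH 2 = 6 := rfl
@[simp] lemma fH3 : fH 3 = 9 := rfl
@[simp] lemma fH4 : fH 4 = 4 := rfl
@[simp] lemma fH5 : fH 5 = 7 := rfl
@[simp] lemma fH6 : fH 6 = 2 := rfl
@[simp] lemma fH7 : fH 7 = 5 := rfl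

lemma fHm {m : ℕ} (hm : m % 8 = 3) : ∀ r < 8, fH r * m % 8 = r := by
  intro r hr; interval_cases r <;> simp <;> omega

def cnt (m y r : ℕ) : ℕ :=
  if (fH r + fH ((y % 8 + 8 - r) % 8)) * m ≤ y
  then (y - (fH r + fH ((y % 8 + 8 - r) % 8)) * m) / 8 + 1 else 0

lemma memH {m : ℕ} (hm : m % 8 = 3) (H : Set ℕ)
    (hH : H = {x | ∃ i ≤ 1, ∃ j ≤ 3, ∃ k : ℕ, x = i * (3 * m) + 2 * j * m + 8 * k}) :
    ∀ y, y ∈ H ↔ fH (y % 8) * m ≤ y := by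
  intro y
  rw [hH]
  simp only [Set.mem_setOf_eq]
  constructor
  · rintro ⟨i, hi, j, hj, t, rfl⟩
    interval_cases i <;> interval_cases j <;>
      [ (have e : (0 * (3*m) + 2*0*m + 8*t) % 8 = 0 := by omega);
        (have e : (0 * (3*m) + 2*1*m + 8*t) % 8 = 6 := by omega);
        (have e : (0 * (3*m) + 2*2*m + 8*t) % 8 = 4 := by omega);
        (have e : (0 * (3*m) + 2*3*m + 8*t) % 8 = 2 := by omega);
        (have e : (1 * (3*m) + 2*0*m + 8*t) % 8 = 1 := by omega);
        (have e : (1 * (3*m) + 2*1*m + 8*t) % 8 = 7 := by omega);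
        (have e : (1 * (3*m) + 2*2*m + 8*t) % 8 = 5 := by omega);
        (have e : (1 * (3*m) + 2*3*m + 8*t) % 8 = 3 := by omega)] <;>
      rw [e] <;> simp <;> omega
  · intro hy
    have h8 : y % 8 = 0 ∨ y % 8 = 1 ∨ y % 8 = 2 ∨ y % 8 = 3 ∨
        y % 8 = 4 ∨ y % 8 = 5 ∨ y % 8 = 6 ∨ y % 8 = 7 := by omega
    rcases h8 with e|e|e|e|e|e|e|e <;> rw [e] at hy <;> simp at hy
    · exact ⟨0, by norm_num, 0, by norm_num, y / 8, by omega⟩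
    · exact ⟨1, by norm_num, 0, by norm_num, (y - 3*m) / 8, by omega⟩
    · exact ⟨0, by norm_num, 3, by norm_num, (y - 6*m) / 8, by omega⟩
    · exact ⟨1, by norm_num, 3, by norm_num, (y - 9*m) / 8, by omega⟩
    · exact ⟨0, by norm_num, 2, by norm_num, (y - 4*m) / 8, by omega⟩
    · exact ⟨1, by norm_num, 2, by norm_num, (y - 7*m) / 8, by omega⟩
    · exact ⟨0, by norm_num, 1, by norm_num, (y - 2*m) / 8, by omega⟩
    · exact ⟨1, by norm_num, 1, by norm_num, (y - 5*m) / 8, by omega⟩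

lemma nu_eq {m : ℕ} (hm : m % 8 = 3) (H : Set ℕ)
    (hmem : ∀ y, y ∈ H ↔ fH (y % 8) * m ≤ y)
    (ν : ℕ → ℕ)
    (hν : ∀ x, ν x = {p : ℕ × ℕ | p.1 ∈ H ∧ p.2 ∈ H ∧ p.1 + p.2 = x}.ncard)
    (y : ℕ) : ν y = ∑ r ∈ Finset.range 8, cnt m y r := by
  classical
  set F := (Finset.range (y+1)).filter
      (fun a => fH (a % 8) * m ≤ a ∧ fH ((y - a) % 8) * m ≤ y - a) with hF
  have hS : {p : ℕ × ℕ | p.1 ∈ H ∧ p.2 ∈ H ∧ p.1 + p.2 = y}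
      = ↑(F.image (fun a => (a, y - a))) := by
    ext ⟨a, b⟩
    simp only [Set.mem_setOf_eq, Finset.coe_image, Set.mem_image, Finset.mem_coe, hF,
      Finset.mem_filter, Finset.mem_range, Nat.lt_succ_iff, hmem, Prod.mk.injEq]
    constructor
    · rintro ⟨h1, h2, h3⟩
      have hb : b = y - a := by omega
      subst hb
      exact ⟨a, ⟨by omega, h1, h2⟩, rfl, rfl⟩
    · rintro ⟨a', ⟨ha', h1, h2⟩, rfl, rfl⟩
      exact ⟨h1, h2, by omega⟩
  have hinj : Set.InjOn (fun a => (a, y - a)) ↑F := by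
    intro a _ b _ h
    exact (Prod.ext_iff.mp h).1
  rw [hν, hS, Set.ncard_coe_finset, Finset.card_image_of_injOn hinj]
  have hpart : F = (Finset.range 8).biUnion
      (fun r => (Finset.range (cnt m y r)).image (fun t => fH r * m + 8 * t)) := by
    ext a
    simp only [hF, Finset.mem_filter, Finset.mem_range, Finset.mem_biUnion,
      Finset.mem_image, Nat.lt_succ_iff]
    constructor
    · rintro ⟨hay, h1, h2⟩
      have hr := fHm hm (a % 8) (by omega)
      refine ⟨a % 8, by omega, (a - fH (a % 8) * m) / 8, ?_, by omega⟩
      have hs : (y % 8 + 8 - a % 8) % 8 = (y - a) % 8 := by omega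
      unfold cnt
      rw [hs, if_pos (by rw [add_mul]; omega), add_mul]
      omega
    · rintro ⟨r, hr8, t, ht, rfl⟩
      unfold cnt at ht
      have hr := fHm hm r (by omega)
      have hs8 : (y % 8 + 8 - r) % 8 < 8 := by omega
      have hs := fHm hm ((y % 8 + 8 - r) % 8) hs8
      rw [add_mul] at ht
      split_ifs at ht with hw
      · refine ⟨by omega, ?_, ?_⟩
        · have h8 : (fH r * m + 8 * t) % 8 = r := by omega
          rw [h8]; omega
        · have h8 : (y - (fH r * m + 8 * t)) % 8 = (y % 8 + 8 - r) % 8 := by omega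
          rw [h8]; omega
      · omega
  rw [hpart, Finset.card_biUnion]
  · refine Finset.sum_congr rfl (fun r hr => ?_)
    rw [Finset.card_image_of_injective _ (fun a b h => by omega), Finset.card_range]
  · intro r hr r' hr' hne
    simp only [Finset.coe_range, Set.mem_Iio, Finset.mem_coe, Finset.mem_range] at hr hr'
    have h1 := fHm hm r hr
    have h2 := fHm hm r' hr'
    rw [Function.onFun, Finset.disjoint_left]
    intro a ha ha'
    simp only [Finset.mem_image, Finset.mem_range] at ha ha'
    obtain ⟨t, ht, rfl⟩ := ha
    obtain ⟨t', ht', he⟩ := ha'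
    omega

end Stmt6Aux

set_option maxHeartbeats 2000000 in
open Stmt6Aux in
/-- The Feng–Rao designed minimum distance `d_ORD(C_ℓ(P_∞))` for `ρ_{ℓ+1} = (1,2,k)`,
`k < m`, on `GGS(2,n)`. -/
theorem stmt_6 (n m : ℕ) (hn : 5 ≤ n) (hodd : Odd n) (hm : 3 * m = 2 ^ n + 1)
    (H : Set ℕ)
    (hH : H = {x | ∃ i ≤ 1, ∃ j ≤ 3, ∃ k : ℕ, x = i * (2 ^ n + 1) + 2 * j * m + 8 * k})
    (ν : ℕ → ℕ)
    (hν : ∀ x, ν x = {p : ℕ × ℕ | p.1 ∈ H ∧ p.2 ∈ H ∧ p.1 + p.2 = x}.ncard)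
    (D : ℕ → ℕ)
    (hD : ∀ x, D x = sInf (ν '' {y : ℕ | y ∈ H ∧ x ≤ y}))
    (k : ℕ) (hk : k < m) :
    (k = 0 → D (7 * m + 8 * k) = 6) ∧
    (1 ≤ k ∧ k ≤ m / 4 → D (7 * m + 8 * k) = 8) ∧
    (⌈(m : ℚ) / 4⌉ ≤ (k : ℤ) ∧ k ≤ m / 2 - 2 →
      (D (7 * m + 8 * k) : ℤ) = 8 * (⌈(k : ℚ) - m / 4⌉ + 1)) ∧
    (m / 2 - 1 ≤ k ∧ k ≤ 3 * m / 4 - 2 →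
      (D (7 * m + 8 * k) : ℤ)
        = 2 * (⌈(k : ℚ) + m / 2⌉ + 1) + 6 * (⌈(k : ℚ) + m / 2⌉ - m + 1)) ∧
    (3 * m / 4 - 1 ≤ k ∧ k ≤ m - 2 →
      (D (7 * m + 8 * k) : ℤ)
        = 4 * (⌈(k : ℚ) + m / 4⌉ + 1) + 4 * (⌈(k : ℚ) + m / 4⌉ - m + 1)) ∧
    (k = m - 1 → D (7 * m + 8 * k) = 6 * m) := by
  have hm8 : m % 8 = 3 := by
    have h8 : (8:ℕ) ∣ 2 ^ n := by
      have : (2:ℕ)^3 ∣ 2^n := pow_dvd_pow 2 (by omega)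
      simpa using this
    omega
  have hm11 : 11 ≤ m := by
    have : 2^5 ≤ 2^n := Nat.pow_le_pow_right (by norm_num) hn
    omega
  obtain ⟨q, hq⟩ : ∃ q, m = 8 * q + 3 := ⟨m / 8, by omega⟩
  have hq1 : 1 ≤ q := by omega
  rw [← hm] at hH
  have hmem := memH hm8 H hH
  have hnu := nu_eq hm8 H hmem ν hν
  -- generic D computation
  have key : ∀ x N : ℕ, (∃ y, y ∈ H ∧ x ≤ y ∧ ν y = N) →
      (∀ y, y ∈ H → x ≤ y → N ≤ ν y) → D x = N := by
    rintro x N ⟨y, hyH, hyx, hyv⟩ hlb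
    rw [hD]
    refine le_antisymm (Nat.sInf_le ⟨y, ⟨hyH, hyx⟩, hyv⟩) ?_
    refine le_csInf ⟨N, ⟨y, ⟨hyH, hyx⟩, hyv⟩⟩ ?_
    rintro _ ⟨z, ⟨h1, h2⟩, rfl⟩
    exact hlb z h1 h2
  -- the uniform lower bound
  have lb : ∀ y, y ∈ H → 7*m+8*k ≤ y →
      (k = 0 → 6 ≤ ν y) ∧
      (1 ≤ k ∧ k ≤ 2*q → 8 ≤ ν y) ∧
      (2*q+1 ≤ k ∧ k ≤ 4*q-1 → 8*(k-2*q+1) ≤ ν y) ∧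
      (4*q ≤ k ∧ k ≤ 6*q → 2*(k+4*q+3)+6*(k-4*q) ≤ ν y) ∧
      (6*q+1 ≤ k ∧ k ≤ 8*q+1 → 4*(k+2*q+2)+4*(k-(6*q+1)) ≤ ν y) ∧
      (k = 8*q+2 → 6*m ≤ ν y) := by
    intro y hyH hyx
    rw [hmem] at hyH
    have hy := hnu y
    simp only [Finset.sum_range_succ, Finset.sum_range_zero, cnt] at hy
    have h8 : y % 8 = 0 ∨ y % 8 = 1 ∨ y % 8 = 2 ∨ y % 8 = 3 ∨
        y % 8 = 4 ∨ y % 8 = 5 ∨ y % 8 = 6 ∨ y % 8 = 7 := by omega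
    rcases h8 with e|e|e|e|e|e|e|e <;>
      rw [e] at hy hyH <;> norm_num [fH] at hy hyH <;>
      first
      | (split_ifs at hy <;> omega)
      | omega
  -- witnesses
  have w5 : ν (7*m+8*k) = 6*(k+1) := by
    have hy := hnu (7*m+8*k)
    simp only [Finset.sum_range_succ, Finset.sum_range_zero, cnt] at hy
    have e : (7*m+8*k) % 8 = 5 := by omega
    rw [e] at hy
    norm_num [fH] at hy
    first
      | (split_ifs at hy <;> omega)
      | omega
  have mem5 : (7*m+8*k) ∈ H := by
    rw [hmem]
    have e : (7*m+8*k) % 8 = 5 := by omega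
    rw [e, fH5]; omega
  refine ⟨?_, ?_, ?_, ?_, ?_, ?_⟩
  · -- k = 0
    intro hk0
    refine key _ 6 ⟨7*m+8*k, mem5, le_refl _, by omega⟩ ?_
    intro y h1 h2
    exact ((lb y h1 h2).1) hk0
  · -- 1 ≤ k ≤ m/4
    rintro ⟨h1, h2⟩
    have hk2 : k ≤ 2*q := by omega
    refine key _ 8 ⟨9*m, ?_, by omega, ?_⟩ ?_
    · rw [hmem]
      have e : (9*m) % 8 = 3 := by omega
      rw [e, fH3]
    · have hy := hnu (9*m)
      simp only [Finset.sum_range_succ, Finset.sum_range_zero, cnt] at hy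
      have e : (9*m) % 8 = 3 := by omega
      rw [e] at hy
      norm_num [fH] at hy
      first
      | (split_ifs at hy <;> omega)
      | omega
    · intro y hh1 hh2
      exact ((lb y hh1 hh2).2.1) ⟨h1, hk2⟩
  · -- ⌈m/4⌉ ≤ k ≤ m/2 - 2
    rintro ⟨h1, h2⟩
    have hc : (⌈(m : ℚ) / 4⌉ : ℤ) = 2*q+1 := by
      rw [Int.ceil_eq_iff] <;> push_cast [hq] <;> constructor <;> linarith
    rw [hc] at h1
    have hk1 : 2*q+1 ≤ k := by exact_mod_cast h1
    have hk2 : k ≤ 4*q-1 := by omega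
    have hDx : D (7*m+8*k) = 8*(k-2*q+1) := by
      refine key _ _ ⟨7*m+8*k+6, ?_, by omega, ?_⟩ ?_
      · rw [hmem]
        have e : (7*m+8*k+6) % 8 = 3 := by omega
        rw [e, fH3]; omega
      · have hy := hnu (7*m+8*k+6)
        simp only [Finset.sum_range_succ, Finset.sum_range_zero, cnt] at hy
        have e : (7*m+8*k+6) % 8 = 3 := by omega
        rw [e] at hy
        norm_num [fH] at hy
        first
      | (split_ifs at hy <;> omega)
      | omega
      · intro y hh1 hh2
        exact ((lb y hh1 hh2).2.2.1) ⟨hk1, hk2⟩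
    have hc2 : (⌈(k : ℚ) - m / 4⌉ : ℤ) = (k : ℤ) - 2*q := by
      rw [Int.ceil_eq_iff] <;> push_cast [hq] <;> constructor <;> linarith
    rw [hDx, hc2]
    push_cast
    omega
  · -- m/2 - 1 ≤ k ≤ 3m/4 - 2
    rintro ⟨h1, h2⟩
    have hk1 : 4*q ≤ k := by omega
    have hk2 : k ≤ 6*q := by omega
    have hDx : D (7*m+8*k) = 2*(k+4*q+3)+6*(k-4*q) := by
      refine key _ _ ⟨7*m+8*k+4, ?_, by omega, ?_⟩ ?_
      · rw [hmem]
        have e : (7*m+8*k+4) % 8 = 1 := by omega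
        rw [e, fH1]; omega
      · have hy := hnu (7*m+8*k+4)
        simp only [Finset.sum_range_succ, Finset.sum_range_zero, cnt] at hy
        have e : (7*m+8*k+4) % 8 = 1 := by omega
        rw [e] at hy
        norm_num [fH] at hy
        first
      | (split_ifs at hy <;> omega)
      | omega
      · intro y hh1 hh2
        exact ((lb y hh1 hh2).2.2.2.1) ⟨hk1, hk2⟩
    have hc : (⌈(k : ℚ) + m / 2⌉ : ℤ) = (k : ℤ) + 4*q + 2 := by
      rw [Int.ceil_eq_iff] <;> push_cast [hq] <;> constructor <;> linarith
    rw [hDx, hc]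
    push_cast
    omega
  · -- 3m/4 - 1 ≤ k ≤ m - 2
    rintro ⟨h1, h2⟩
    have hk1 : 6*q+1 ≤ k := by omega
    have hk2 : k ≤ 8*q+1 := by omega
    have hDx : D (7*m+8*k) = 4*(k+2*q+2)+4*(k-(6*q+1)) := by
      refine key _ _ ⟨7*m+8*k+2, ?_, by omega, ?_⟩ ?_
      · rw [hmem]
        have e : (7*m+8*k+2) % 8 = 7 := by omega
        rw [e, fH7]; omega
      · have hy := hnu (7*m+8*k+2)
        simp only [Finset.sum_range_succ, Finset.sum_range_zero, cnt] at hy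
        have e : (7*m+8*k+2) % 8 = 7 := by omega
        rw [e] at hy
        norm_num [fH] at hy
        first
      | (split_ifs at hy <;> omega)
      | omega
      · intro y hh1 hh2
        exact ((lb y hh1 hh2).2.2.2.2.1) ⟨hk1, hk2⟩
    have hc : (⌈(k : ℚ) + m / 4⌉ : ℤ) = (k : ℤ) + 2*q + 1 := by
      rw [Int.ceil_eq_iff] <;> push_cast [hq] <;> constructor <;> linarith
    rw [hDx, hc]
    push_cast
    omega
  · -- k = m - 1
    intro hk0
    refine key _ (6*m) ⟨7*m+8*k, mem5, le_refl _, by omega⟩ ?_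
    intro y h1 h2
    exact ((lb y h1 h2).2.2.2.2.2) (by omega)
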